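/- Let (𝔤,ω,𝔞,N) be a finite-dimensional strongly polarized orthosymplectic quasi-Frobenius Lie superalgebra over 𝕂 (𝔞 a Lagrangian ideal, N a complementary Lagrangian subspace), and let (𝔥 = 𝔤/𝔞, ∇) be its associated quotient flat Lie superalgebra. Then there exists an even, super anti-symmetric 2-cocycle α : 𝔥 × 𝔥 → 𝔥* for the dual representation ρ, satisfying the cyclic condition (−1)^{p(u)p(w)}α(u,v)(w) + (−1)^{p(w)p(v)}α(w,u)(v) + (−1)^{p(v)p(u)}α(v,w)(u) = 0, such that the map Φ : 𝔤 = N ⊕ 𝔞 → 𝔥 ⊕ 𝔥*, given on N by the projection 𝔤 → 𝔥 and on 𝔞 by a ↦ i_ω(a) where i_ω(a)(u) = ω(a, ũ) for a lift ũ of u, is an isomorphism of Lie superalgebras onto the T*-extension 𝔤' = 𝔥 ⊕ 𝔥* (with bracket [u,v] = [u,v]_𝔥 + α(u,v), [u,ξ] = ρ(u)·ξ, [ξ,ζ] = 0) which carries ω to the form ω'(u+ξ, v+ζ) = ξ(v) − (−1)^{p(ζ)p(u)}ζ(u). -/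

import Mathlib

noncomputable section

/-- The sign `(−1)^{ij}` for parities `i, j` encoded as booleans
(`false` = even, `true` = odd). -/
def ssign (K : Type*) [Field K] (i j : Bool) : K := if i && j then -1 else 1

lemma ssign_ff (K : Type*) [Field K] : ssign K false false = 1 := rfl
lemma ssign_ft (K : Type*) [Field K] : ssign K false true = 1 := rfl
lemma ssign_tf (K : Type*) [Field K] : ssign K true false = 1 := rfl
lemma ssign_tt (K : Type*) [Field K] : ssign K true true = -1 := rfl

section Defs

variable (K : Type*) [Field K]

/-- A map `f : V → V → W` is bilinear over `K`. -/
def IsBilinMap (V W : Type*) [AddCommGroup V] [Module K V] [AddCommGroup W] [Module K W]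
    (f : V → V → W) : Prop :=
  (∀ x y z : V, f (x + y) z = f x z + f y z) ∧
  (∀ (c : K) (x y : V), f (c • x) y = c • f x y) ∧
  (∀ x y z : V, f x (y + z) = f x y + f x z) ∧
  (∀ (c : K) (x y : V), f x (c • y) = c • f x y)

variable (V : Type*) [AddCommGroup V] [Module K V]

/-- A Lie superalgebra structure over `K` on the `ℤ/2`-graded space `V`,
with homogeneous components `sub false` (even part) and `sub true` (odd part),
and bracket `br`.  Includes super anti-commutativity, the super Jacobi identity,
and (when `char K = 3`) the extra cubic condition on odd elements. -/
structure IsLieSuperAlg (sub : Bool → Submodule K V) (br : V → V → V) : Prop where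
  compl : IsCompl (sub false) (sub true)
  bilin : IsBilinMap K V V br
  graded : ∀ i j : Bool, ∀ x ∈ sub i, ∀ y ∈ sub j, br x y ∈ sub (Bool.xor i j)
  antisymm : ∀ i j : Bool, ∀ x ∈ sub i, ∀ y ∈ sub j, br y x = -(ssign K i j • br x y)
  jacobi : ∀ i j k : Bool, ∀ x ∈ sub i, ∀ y ∈ sub j, ∀ z ∈ sub k,
    ssign K i k • br x (br y z) + ssign K j i • br y (br z x) + ssign K k j • br z (br x y) = 0
  jacobi3 : ringChar K = 3 → ∀ f ∈ sub true, br f (br f f) = 0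

/-- Graded anti-symmetry of a bilinear form: `ω(y,x) = -(-1)^{p(x)p(y)} ω(x,y)`. -/
def IsSuperSkew (sub : Bool → Submodule K V) (ω : V → V → K) : Prop :=
  ∀ i j : Bool, ∀ x ∈ sub i, ∀ y ∈ sub j, ω y x = -(ssign K i j * ω x y)

/-- Closedness (2-cocycle condition) of a bilinear form with respect to a bracket. -/
def IsClosedForm (sub : Bool → Submodule K V) (br : V → V → V) (ω : V → V → K) : Prop :=
  ∀ i j k : Bool, ∀ x ∈ sub i, ∀ y ∈ sub j, ∀ z ∈ sub k,
    ssign K i k * ω x (br y z) + ssign K k j * ω z (br x y) + ssign K j i * ω y (br z x) = 0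

/-- Non-degeneracy of a bilinear form. -/
def IsNondegForm (ω : V → V → K) : Prop := ∀ x : V, (∀ y : V, ω x y = 0) → x = 0

/-- A bilinear form is even if it vanishes on pairs of homogeneous elements
of opposite parity. -/
def IsEvenForm (sub : Bool → Submodule K V) (ω : V → V → K) : Prop :=
  ∀ x y : V, (x ∈ sub false ∧ y ∈ sub true) ∨ (x ∈ sub true ∧ y ∈ sub false) → ω x y = 0

/-- A bilinear form is odd if it vanishes on pairs of homogeneous elements
of the same parity. -/
def IsOddForm (sub : Bool → Submodule K V) (ω : V → V → K) : Prop :=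
  ∀ i : Bool, ∀ x ∈ sub i, ∀ y ∈ sub i, ω x y = 0

/-- `(𝔤, ω)` is quasi-Frobenius: `ω` is a closed anti-symmetric non-degenerate
bilinear form. -/
def IsQuasiFrobenius (sub : Bool → Submodule K V) (br : V → V → V) (ω : V → V → K) : Prop :=
  IsBilinMap K V K ω ∧ IsSuperSkew K V sub ω ∧ IsClosedForm K V sub br ω ∧ IsNondegForm K V ω

end Defs

/-- The grading on the dual space: `(𝔥*)_i = {ξ | ξ(𝔥_{1−i}) = 0}`. -/
def dualSub (K H : Type*) [Field K] [AddCommGroup H] [Module K H]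
    (sub : Bool → Submodule K H) (i : Bool) : Submodule K (Module.Dual K H) :=
  Submodule.dualAnnihilator (sub (!i))

set_option maxHeartbeats 2000000

/-- (Converse of the `T*`-extension.)  Let `(𝔤, ω, 𝔞, N)` be a
finite-dimensional strongly polarized orthosymplectic quasi-Frobenius Lie superalgebra
(`𝔞` a Lagrangian ideal, `N` a complementary Lagrangian subspace) and let
`(𝔥 = 𝔤/𝔞, ∇)` be its associated quotient flat Lie superalgebra (where
`ω_𝔥(∇_u v, a) = −(−1)^{p(u)p(v)} ω(ṽ, [ũ, a])`).  Then there is an even super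
anti-symmetric 2-cocycle `α` for the dual representation satisfying the cyclic
condition, such that the map `Φ` — given on `N` by the projection `𝔤 → 𝔥` and on `𝔞`
by `a ↦ i_ω(a)`, `i_ω(a)(u) = ω(a, ũ)` — is an isomorphism of Lie superalgebras onto
the `T*`-extension `𝔥 ⊕ 𝔥*` carrying `ω` to the canonical form of the extension. -/
theorem tstar_extension_converse
    (K V : Type*) [Field K] [AddCommGroup V] [Module K V] [FiniteDimensional K V]
    (hchar : ringChar K ≠ 2)
    (sub : Bool → Submodule K V) (br : V → V → V) (ω : V → V → K)
    (hLie : IsLieSuperAlg K V sub br)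
    (hQF : IsQuasiFrobenius K V sub br ω)
    (hEven : IsEvenForm K V sub ω)
    -- the strong polarization (𝔞, N)
    (a N : Submodule K V)
    (hcompl : IsCompl a N)
    (haIdeal : ∀ g : V, ∀ p ∈ a, br g p ∈ a ∧ br p g ∈ a)
    (haLag : ∀ v : V, v ∈ a ↔ ∀ w ∈ a, ω v w = 0)
    (hNLag : ∀ v : V, v ∈ N ↔ ∀ w ∈ N, ω v w = 0)
    -- the quotient Lie superalgebra 𝔥 = 𝔤/𝔞 with the induced grading and bracket
    (brH : (V ⧸ a) → (V ⧸ a) → (V ⧸ a))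
    (hbrH : ∀ x y : V, brH (a.mkQ x) (a.mkQ y) = a.mkQ (br x y))
    (hLieH : IsLieSuperAlg K (V ⧸ a) (fun i => (sub i).map a.mkQ) brH)
    -- the associated flat torsion-free connection ∇ on 𝔥
    (conn : (V ⧸ a) →ₗ[K] (V ⧸ a) →ₗ[K] (V ⧸ a))
    (hgr : ∀ i j : Bool, ∀ u ∈ (sub i).map a.mkQ, ∀ v ∈ (sub j).map a.mkQ,
      conn u v ∈ (sub (Bool.xor i j)).map a.mkQ)
    (hTF : ∀ i j : Bool, ∀ u ∈ (sub i).map a.mkQ, ∀ v ∈ (sub j).map a.mkQ,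
      conn u v - ssign K i j • conn v u = brH u v)
    (hFlat : ∀ i j : Bool, ∀ u ∈ (sub i).map a.mkQ, ∀ v ∈ (sub j).map a.mkQ,
      ∀ w : V ⧸ a,
      conn u (conn v w) - ssign K i j • conn v (conn u w) = conn (brH u v) w)
    (hconn : ∀ (i j : Bool) (u v : V), u ∈ sub i → v ∈ sub j →
      ∀ z : V, a.mkQ z = conn (a.mkQ u) (a.mkQ v) →
        ∀ c ∈ a, ω z c = -(ssign K i j * ω v (br u c))) :
    ∃ (α : (V ⧸ a) → (V ⧸ a) → Module.Dual K (V ⧸ a))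
      (brG : (V ⧸ a) × Module.Dual K (V ⧸ a) → (V ⧸ a) × Module.Dual K (V ⧸ a) →
        (V ⧸ a) × Module.Dual K (V ⧸ a))
      (ωG : (V ⧸ a) × Module.Dual K (V ⧸ a) → (V ⧸ a) × Module.Dual K (V ⧸ a) → K)
      (Φ : V → (V ⧸ a) × Module.Dual K (V ⧸ a)),
      -- α is an even super anti-symmetric 2-cocycle for the dual representation,
      -- satisfying the cyclic condition
      IsBilinMap K (V ⧸ a) (Module.Dual K (V ⧸ a)) α
      ∧ (∀ i j : Bool, ∀ u ∈ (sub i).map a.mkQ, ∀ v ∈ (sub j).map a.mkQ,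
          α u v ∈ dualSub K (V ⧸ a) (fun i => (sub i).map a.mkQ) (Bool.xor i j))
      ∧ (∀ i j : Bool, ∀ u ∈ (sub i).map a.mkQ, ∀ v ∈ (sub j).map a.mkQ,
          α v u = -(ssign K i j • α u v))
      ∧ (∀ i j k : Bool, ∀ u ∈ (sub i).map a.mkQ, ∀ v ∈ (sub j).map a.mkQ,
          ∀ w ∈ (sub k).map a.mkQ,
          -(ssign K i (Bool.xor j k)) • ((α v w).comp (conn u))
            - ssign K i j • (-(ssign K j (Bool.xor i k)) • ((α u w).comp (conn v)))
            + (ssign K k i * ssign K k j) •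
                (-(ssign K k (Bool.xor i j)) • ((α u v).comp (conn w)))
            - α (brH u v) w + ssign K j k • α (brH u w) v + α u (brH v w) = 0)
      ∧ (∀ i j k : Bool, ∀ u ∈ (sub i).map a.mkQ, ∀ v ∈ (sub j).map a.mkQ,
          ∀ w ∈ (sub k).map a.mkQ,
          ssign K i k * α u v w + ssign K k j * α w u v + ssign K j i * α v w u = 0)
      -- brG is the bracket of the T*-extension 𝔥 ⊕ 𝔥*
      ∧ IsBilinMap K ((V ⧸ a) × Module.Dual K (V ⧸ a))
          ((V ⧸ a) × Module.Dual K (V ⧸ a)) brG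
      ∧ (∀ u v : V ⧸ a, brG (u, 0) (v, 0) = (brH u v, α u v))
      ∧ (∀ i j : Bool, ∀ u ∈ (sub i).map a.mkQ,
          ∀ ξ ∈ dualSub K (V ⧸ a) (fun i => (sub i).map a.mkQ) j,
          brG (u, 0) (0, ξ) = (0, -(ssign K i j) • (ξ.comp (conn u))))
      ∧ (∀ i j : Bool, ∀ u ∈ (sub i).map a.mkQ,
          ∀ ξ ∈ dualSub K (V ⧸ a) (fun i => (sub i).map a.mkQ) j,
          brG (0, ξ) (u, 0) = (0, ξ.comp (conn u)))
      ∧ (∀ ξ ζ : Module.Dual K (V ⧸ a), brG (0, ξ) (0, ζ) = 0)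
      -- ωG is the canonical even form of the T*-extension
      ∧ IsBilinMap K ((V ⧸ a) × Module.Dual K (V ⧸ a)) K ωG
      ∧ (∀ i i' j j' : Bool, ∀ u ∈ (sub i).map a.mkQ,
          ∀ ξ ∈ dualSub K (V ⧸ a) (fun i => (sub i).map a.mkQ) i',
          ∀ v ∈ (sub j).map a.mkQ,
          ∀ ζ ∈ dualSub K (V ⧸ a) (fun i => (sub i).map a.mkQ) j',
          ωG (u, ξ) (v, ζ) = ξ v - ssign K j' i * ζ u)
      -- Φ is a linear bijection, given on N by the projection and on 𝔞 by i_ω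
      ∧ (∀ x y : V, Φ (x + y) = Φ x + Φ y)
      ∧ (∀ (c : K) (x : V), Φ (c • x) = c • Φ x)
      ∧ Function.Bijective Φ
      ∧ (∀ x ∈ N, Φ x = (a.mkQ x, 0))
      ∧ (∀ p ∈ a, (Φ p).1 = 0 ∧ ∀ u : V, (Φ p).2 (a.mkQ u) = ω p u)
      -- Φ is an isomorphism of Lie superalgebras carrying ω to ωG
      ∧ (∀ x y : V, Φ (br x y) = brG (Φ x) (Φ y))
      ∧ (∀ x y : V, ωG (Φ x) (Φ y) = ω x y) := by
  classical
  obtain ⟨hω1, hω2, hω3, hω4⟩ := hQF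
  obtain ⟨ωa1, ωs1, ωa2, ωs2⟩ := hω1
  obtain ⟨bra1, brs1, bra2, brs2⟩ := hLie.bilin
  -- 2 ≠ 0 in K
  have h2ne : (2 : K) ≠ 0 := by
    intro h
    exact hchar (CharP.ringChar_of_prime_eq_zero Nat.prime_two (by exact_mod_cast h))
  -- decomposition into homogeneous components
  have hdec : ∀ x : V, ∃ x0 ∈ sub false, ∃ x1 ∈ sub true, x0 + x1 = x := fun x => by
    obtain ⟨x0, x1, h0, h1, hs⟩ := Submodule.codisjoint_iff_exists_add_eq.mp hLie.compl.codisjoint x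
    exact ⟨x0, h0, x1, h1, hs⟩
  -- Lagrangian subspaces are graded
  have hlag_pair : ∀ L : Submodule K V, (∀ v : V, v ∈ L ↔ ∀ w ∈ L, ω v w = 0) →
      ∀ x0 ∈ sub false, ∀ x1 ∈ sub true, ∀ y0 ∈ sub false, ∀ y1 ∈ sub true,
        x0 + x1 ∈ L → y0 + y1 ∈ L → ω x1 y1 = 0 ∧ ω x0 y0 = 0 := by
    intro L hL x0 hx0 x1 hx1 y0 hy0 y1 hy1 hx hy
    have h1 : ω (x0 + x1) (y0 + y1) = 0 := (hL _).mp hx _ hy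
    have h2 : ω (y0 + y1) (x0 + x1) = 0 := (hL _).mp hy _ hx
    have e01 : ω x0 y1 = 0 := hEven _ _ (Or.inl ⟨hx0, hy1⟩)
    have e10 : ω x1 y0 = 0 := hEven _ _ (Or.inr ⟨hx1, hy0⟩)
    have e01' : ω y0 x1 = 0 := hEven _ _ (Or.inl ⟨hy0, hx1⟩)
    have e10' : ω y1 x0 = 0 := hEven _ _ (Or.inr ⟨hy1, hx0⟩)
    have s00 : ω y0 x0 = -(ssign K false false * ω x0 y0) := hω2 false false x0 hx0 y0 hy0
    have s11 : ω y1 x1 = -(ssign K true true * ω x1 y1) := hω2 true true x1 hx1 y1 hy1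
    rw [ssign_ff] at s00
    rw [ssign_tt] at s11
    rw [ωa1, ωa2, ωa2, e01, e10] at h1
    rw [ωa1, ωa2, ωa2, e01', e10', s00, s11] at h2
    have hx1y1 : ω x1 y1 = 0 := by
      have h3 : (2 : K) * ω x1 y1 = 0 := by linear_combination h1 + h2
      rcases mul_eq_zero.mp h3 with h | h
      · exact absurd h h2ne
      · exact h
    exact ⟨hx1y1, by linear_combination h1 - hx1y1⟩
  have hLgr : ∀ L : Submodule K V, (∀ v : V, v ∈ L ↔ ∀ w ∈ L, ω v w = 0) →
      ∀ x ∈ L, ∀ x0 ∈ sub false, ∀ x1 ∈ sub true, x0 + x1 = x → x0 ∈ L ∧ x1 ∈ L := by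
    intro L hL x hx x0 hx0 x1 hx1 hsum
    have hxL : x0 + x1 ∈ L := by rw [hsum]; exact hx
    have hx1L : x1 ∈ L := by
      rw [hL]
      intro w hw
      obtain ⟨w0, hw0, w1, hw1, hwsum⟩ := hdec w
      have hwL : w0 + w1 ∈ L := by rw [hwsum]; exact hw
      have hp := hlag_pair L hL x0 hx0 x1 hx1 w0 hw0 w1 hw1 hxL hwL
      have e := hEven x1 w0 (Or.inr ⟨hx1, hw0⟩)
      calc ω x1 w = ω x1 (w0 + w1) := by rw [hwsum]
        _ = ω x1 w0 + ω x1 w1 := ωa2 _ _ _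
        _ = 0 := by rw [e, hp.1, add_zero]
    refine ⟨?_, hx1L⟩
    have hx0e : x0 = x - x1 := by rw [← hsum]; abel
    rw [hx0e]
    exact L.sub_mem hx hx1L
  -- the bracket vanishes on a
  have habr : ∀ p ∈ a, ∀ q ∈ a, br p q = 0 := by
    have hom : ∀ m l : Bool, ∀ p ∈ a, p ∈ sub m → ∀ q ∈ a, q ∈ sub l → br p q = 0 := by
      intro m l p hpa hpm q hqa hql
      apply hω4
      intro y
      obtain ⟨y0, hy0, y1, hy1, hysum⟩ := hdec y
      have key : ∀ k : Bool, ∀ z ∈ sub k, ω (br p q) z = 0 := by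
        intro k z hz
        have hcl := hω3 k m l z hz p hpm q hql
        have hzp : ω q (br z p) = 0 := (haLag q).mp hqa _ (haIdeal z p hpa).1
        have hqz : ω p (br q z) = 0 := (haLag p).mp hpa _ (haIdeal z q hqa).2
        rw [hzp, hqz, mul_zero, mul_zero, add_zero, add_zero] at hcl
        have hzbr : ω z (br p q) = 0 := by
          rcases mul_eq_zero.mp hcl with h | h
          · exfalso
            revert h
            cases k <;> cases l <;>
              simp only [ssign_ff, ssign_ft, ssign_tf, ssign_tt] <;> norm_num
          · exact h
        have hsk := hω2 k (Bool.xor m l) z hz (br p q) (hLie.graded m l p hpm q hql)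
        rw [hsk, hzbr, mul_zero, neg_zero]
      calc ω (br p q) y = ω (br p q) (y0 + y1) := by rw [hysum]
        _ = ω (br p q) y0 + ω (br p q) y1 := ωa2 _ _ _
        _ = 0 := by rw [key false y0 hy0, key true y1 hy1, add_zero]
    intro p hpa q hqa
    obtain ⟨p0, hp0, p1, hp1, hpsum⟩ := hdec p
    obtain ⟨q0, hq0, q1, hq1, hqsum⟩ := hdec q
    obtain ⟨hp0a, hp1a⟩ := hLgr a haLag p hpa p0 hp0 p1 hp1 hpsum
    obtain ⟨hq0a, hq1a⟩ := hLgr a haLag q hqa q0 hq0 q1 hq1 hqsum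
    calc br p q = br (p0 + p1) (q0 + q1) := by rw [hpsum, hqsum]
      _ = br p0 (q0 + q1) + br p1 (q0 + q1) := bra1 _ _ _
      _ = br p0 q0 + br p0 q1 + (br p1 q0 + br p1 q1) := by rw [bra2, bra2]
      _ = 0 := by
          rw [hom false false p0 hp0a hp0 q0 hq0a hq0, hom false true p0 hp0a hp0 q1 hq1a hq1,
            hom true false p1 hp1a hp1 q0 hq0a hq0, hom true true p1 hp1a hp1 q1 hq1a hq1]
          simp
  -- the section σ of the quotient map with image N
  obtain ⟨σ, hσN, hσmk⟩ :
      ∃ σ : (V ⧸ a) →ₗ[K] V, (∀ h : V ⧸ a, σ h ∈ N) ∧ ∀ h : V ⧸ a, a.mkQ (σ h) = h := by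
    refine ⟨N.subtype ∘ₗ (Submodule.quotientEquivOfIsCompl a N hcompl).toLinearMap,
      fun h => (Submodule.quotientEquivOfIsCompl a N hcompl h).2, fun h => ?_⟩
    show a.mkQ (N.subtype ((Submodule.quotientEquivOfIsCompl a N hcompl) h)) = h
    rw [Submodule.mkQ_apply]
    exact Submodule.mk_quotientEquivOfIsCompl_apply hcompl h
  have hσd : ∀ t : V, σ (a.mkQ t) - t ∈ a := by
    intro t
    have h0 : a.mkQ (σ (a.mkQ t) - t) = 0 := by rw [map_sub, hσmk, sub_self]
    rwa [← LinearMap.mem_ker, Submodule.ker_mkQ] at h0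
  -- Riesz representation for ω
  have hRiesz : ∀ f : Module.Dual K V, ∃ p : V, ∀ y, ω p y = f y := by
    intro f
    let Ω : V →ₗ[K] V →ₗ[K] K := LinearMap.mk₂ K ω ωa1 ωs1 ωa2 ωs2
    have hinj : Function.Injective Ω := by
      rw [← LinearMap.ker_eq_bot]
      refine LinearMap.ker_eq_bot'.mpr fun x hx => hω4 x fun y => ?_
      have h5 : Ω x y = 0 := by rw [hx]; rfl
      exact h5
    obtain ⟨p, hp⟩ := (LinearMap.injective_iff_surjective_of_finrank_eq_finrank
      Subspace.dual_finrank_eq.symm).mp hinj f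
    exact ⟨p, fun y => by rw [← hp]; rfl⟩
  -- the map i_ω
  obtain ⟨iω, hiω⟩ :
      ∃ iω : V →ₗ[K] Module.Dual K (V ⧸ a), ∀ (x : V) (h : V ⧸ a), iω x h = ω x (σ h) := by
    let Ω : V →ₗ[K] V →ₗ[K] K := LinearMap.mk₂ K ω ωa1 ωs1 ωa2 ωs2
    exact ⟨{ toFun := fun x => (Ω x).comp σ
             map_add' := by intro x y; ext h; simp
             map_smul' := by intro c x; ext h; simp }, fun _ _ => rfl⟩
  have hiωa : ∀ p ∈ a, ∀ t : V, iω p (a.mkQ t) = ω p t := by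
    intro p hp t
    rw [hiω]
    have hst : σ (a.mkQ t) = t + (σ (a.mkQ t) - t) := by abel
    rw [hst, ωa2, (haLag p).mp hp _ (hσd t), add_zero]
  have hiωN : ∀ n ∈ N, iω n = 0 := by
    intro n hn
    refine LinearMap.ext fun h => ?_
    rw [hiω]
    exact (hNLag n).mp hn _ (hσN h)
  -- membership in a via mkQ
  have hmem_a : ∀ x : V, a.mkQ x = 0 → x ∈ a := by
    intro x hx
    rwa [← LinearMap.mem_ker, Submodule.ker_mkQ] at hx
  have hmkQa : ∀ p ∈ a, a.mkQ p = 0 := by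
    intro p hp
    rwa [← Submodule.ker_mkQ a, LinearMap.mem_ker] at hp
  -- the map Φ
  obtain ⟨Φl, hΦl⟩ :
      ∃ Φl : V →ₗ[K] (V ⧸ a) × Module.Dual K (V ⧸ a), ∀ x : V, Φl x = (a.mkQ x, iω x) :=
    ⟨(a.mkQ).prod iω, fun _ => rfl⟩
  have hΦinj : Function.Injective Φl := by
    rw [← LinearMap.ker_eq_bot]
    refine LinearMap.ker_eq_bot'.mpr fun x hx => ?_
    have hx' : (a.mkQ x, iω x) = ((0 : V ⧸ a), (0 : Module.Dual K (V ⧸ a))) := by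
      rw [← hΦl]; exact hx
    have h1 : a.mkQ x = 0 := congrArg Prod.fst hx'
    have h2 : iω x = 0 := congrArg Prod.snd hx'
    have hxa : x ∈ a := hmem_a x h1
    refine hω4 x fun y => ?_
    have h3 := hiωa x hxa y
    rw [h2] at h3
    simpa using h3.symm
  have hτex : ∀ ξ : Module.Dual K (V ⧸ a), ∃ p, p ∈ a ∧ iω p = ξ := by
    intro ξ
    obtain ⟨p, hp⟩ := hRiesz (ξ.comp a.mkQ)
    have hpa : p ∈ a := by
      rw [haLag]
      intro w hw
      have h1 : ω p w = ξ (a.mkQ w) := hp w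
      rwa [hmkQa w hw, map_zero] at h1
    refine ⟨p, hpa, ?_⟩
    refine LinearMap.ext fun h => ?_
    obtain ⟨t, rfl⟩ := Submodule.mkQ_surjective a h
    rw [hiωa p hpa t]
    exact hp t
  have hΦsurj : Function.Surjective Φl := by
    rintro ⟨u, ξ⟩
    obtain ⟨p, hpa, hpξ⟩ := hτex ξ
    refine ⟨σ u + p, ?_⟩
    rw [map_add, hΦl, hΦl, hσmk, hmkQa p hpa, hiωN _ (hσN u), hpξ]
    simp
  obtain ⟨Ψ, hΨ1, hΨ2, hΨadd, hΨsmul⟩ :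
      ∃ Ψ : (V ⧸ a) × Module.Dual K (V ⧸ a) → V, (∀ x : V, Ψ (Φl x) = x) ∧
        (∀ X, Φl (Ψ X) = X) ∧ (∀ X Y, Ψ (X + Y) = Ψ X + Ψ Y) ∧
        ∀ (c : K) (X), Ψ (c • X) = c • Ψ X := by
    let eΦ : V ≃ₗ[K] (V ⧸ a) × Module.Dual K (V ⧸ a) :=
      LinearEquiv.ofBijective Φl ⟨hΦinj, hΦsurj⟩
    exact ⟨fun X => eΦ.symm X, fun x => eΦ.symm_apply_apply x,
      fun X => eΦ.apply_symm_apply X, fun X Y => map_add eΦ.symm X Y,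
      fun c X => map_smul eΦ.symm c X⟩
  have hΦσ : ∀ u : V ⧸ a, Φl (σ u) = (u, (0 : Module.Dual K (V ⧸ a))) := by
    intro u
    rw [hΦl, hσmk, hiωN _ (hσN u)]
  have hsymmN : ∀ u : V ⧸ a, Ψ (u, (0 : Module.Dual K (V ⧸ a))) = σ u := by
    intro u
    rw [← hΦσ u, hΨ1]
  have hsymmA : ∀ ξ : Module.Dual K (V ⧸ a),
      Ψ ((0 : V ⧸ a), ξ) ∈ a ∧ iω (Ψ ((0 : V ⧸ a), ξ)) = ξ := by
    intro ξ
    have h1 : (a.mkQ (Ψ ((0 : V ⧸ a), ξ)), iω (Ψ ((0 : V ⧸ a), ξ))) = ((0 : V ⧸ a), ξ) := by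
      rw [← hΦl]; exact hΨ2 _
    exact ⟨hmem_a _ (congrArg Prod.fst h1), congrArg Prod.snd h1⟩
  -- grading of N and σ
  have hNgr := hLgr N hNLag
  have hσgr : ∀ (i : Bool) (u : V ⧸ a), u ∈ (sub i).map a.mkQ → σ u ∈ sub i := by
    intro i u hu
    obtain ⟨s0, hs0, s1, hs1, hsum⟩ := hdec (σ u)
    obtain ⟨hs0N, hs1N⟩ := hNgr (σ u) (hσN u) s0 hs0 s1 hs1 hsum
    have hmks : a.mkQ s0 + a.mkQ s1 = u := by rw [← map_add, hsum, hσmk]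
    have hdisj := hLieH.compl.disjoint
    cases i with
    | false =>
      have h1 : a.mkQ s1 ∈ (sub true).map a.mkQ := ⟨s1, hs1, rfl⟩
      have h2 : a.mkQ s1 ∈ (sub false).map a.mkQ := by
        have he : a.mkQ s1 = u - a.mkQ s0 := by rw [← hmks]; abel
        rw [he]
        exact Submodule.sub_mem _ hu ⟨s0, hs0, rfl⟩
      have h0 : a.mkQ s1 = 0 := Submodule.disjoint_def.mp hdisj _ h2 h1
      have hz : s1 = 0 := Submodule.disjoint_def.mp hcompl.disjoint s1 (hmem_a s1 h0) hs1N
      rw [← hsum, hz, add_zero]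
      exact hs0
    | true =>
      have h1 : a.mkQ s0 ∈ (sub false).map a.mkQ := ⟨s0, hs0, rfl⟩
      have h2 : a.mkQ s0 ∈ (sub true).map a.mkQ := by
        have he : a.mkQ s0 = u - a.mkQ s1 := by rw [← hmks]; abel
        rw [he]
        exact Submodule.sub_mem _ hu ⟨s1, hs1, rfl⟩
      have h0 : a.mkQ s0 = 0 := Submodule.disjoint_def.mp hdisj _ h1 h2
      have hz : s0 = 0 := Submodule.disjoint_def.mp hcompl.disjoint s0 (hmem_a s0 h0) hs0N
      rw [← hsum, hz, zero_add]
      exact hs1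
  -- homogeneity of elements of a whose i_ω image is homogeneous
  have hτhom : ∀ (j : Bool) (ξ : Module.Dual K (V ⧸ a)),
      ξ ∈ dualSub K (V ⧸ a) (fun i => (sub i).map a.mkQ) j →
      ∀ p, p ∈ a → iω p = ξ → p ∈ sub j := by
    intro j ξ hξ p hpa hpξ
    have hξ' : ∀ t ∈ sub (!j), ξ (a.mkQ t) = 0 := by
      intro t ht
      exact (Submodule.mem_dualAnnihilator ξ).mp hξ _ ⟨t, ht, rfl⟩
    obtain ⟨p0, hp0, p1, hp1, hpsum⟩ := hdec p
    have hvan : ∀ pb pg, pb ∈ sub (!j) → pg ∈ sub j → pb + pg = p → pb = 0 := by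
      intro pb pg hpb hpg hpbg
      apply hω4
      intro y
      obtain ⟨y0, hy0, y1, hy1, hysum⟩ := hdec y
      have hkey : ∀ k : Bool, ∀ z ∈ sub k, ω pb z = 0 := by
        intro k z hz
        by_cases hk : k = j
        · subst hk
          cases k with
          | false => exact hEven pb z (Or.inr ⟨by simpa using hpb, hz⟩)
          | true => exact hEven pb z (Or.inl ⟨by simpa using hpb, hz⟩)
        · have hk' : k = !j := by
            cases k <;> cases j <;> first | rfl | exact absurd rfl hk
          subst hk'
          have h1 : ω p z = ξ (a.mkQ z) := by rw [← hpξ]; exact (hiωa p hpa z).symm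
          rw [hξ' z hz] at h1
          have hg : ω pg z = 0 := by
            cases j with
            | false => exact hEven pg z (Or.inl ⟨hpg, by simpa using hz⟩)
            | true => exact hEven pg z (Or.inr ⟨hpg, by simpa using hz⟩)
          have h3 : ω pb z + ω pg z = ω p z := by rw [← hpbg, ωa1]
          rw [h1, hg, add_zero] at h3
          exact h3
      calc ω pb y = ω pb (y0 + y1) := by rw [hysum]
        _ = ω pb y0 + ω pb y1 := ωa2 _ _ _
        _ = 0 := by rw [hkey false y0 hy0, hkey true y1 hy1, add_zero]
    cases j with
    | false =>
      have h0 : p1 = 0 := hvan p1 p0 (by simpa using hp1) hp0 (by rw [add_comm]; exact hpsum)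
      rw [← hpsum, h0, add_zero]
      exact hp0
    | true =>
      have h0 : p0 = 0 := hvan p0 p1 (by simpa using hp0) hp1 hpsum
      rw [← hpsum, h0, zero_add]
      exact hp1
  -- key computational lemma: bracket with a homogeneous element of a
  have hL8 : ∀ (i m : Bool) (x p : V), x ∈ sub i → p ∈ a → p ∈ sub m →
      iω (br x p) = -(ssign K i m) • ((iω p).comp (conn (a.mkQ x))) := by
    intro i m x p hx hpa hpm
    have hbra : br x p ∈ a := (haIdeal x p hpa).1
    apply LinearMap.ext
    intro h
    obtain ⟨t, rfl⟩ := Submodule.mkQ_surjective a h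
    obtain ⟨t0, ht0, t1, ht1, htsum⟩ := hdec t
    have key : ∀ (k : Bool) (t' : V), t' ∈ sub k →
        iω (br x p) (a.mkQ t') =
          (-(ssign K i m) • ((iω p).comp (conn (a.mkQ x)))) (a.mkQ t') := by
      intro k t' ht'
      have hu : a.mkQ x ∈ (sub i).map a.mkQ := ⟨x, hx, rfl⟩
      have hw : a.mkQ t' ∈ (sub k).map a.mkQ := ⟨t', ht', rfl⟩
      obtain ⟨z', hz', hmkz'⟩ := Submodule.mem_map.mp (hgr i k _ hu _ hw)
      have e0 : (-(ssign K i m) • ((iω p).comp (conn (a.mkQ x)))) (a.mkQ t')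
          = -(ssign K i m) * iω p (conn (a.mkQ x) (a.mkQ t')) := rfl
      have e1 : iω (br x p) (a.mkQ t') = ω (br x p) t' := hiωa _ hbra t'
      have e2 : iω p (conn (a.mkQ x) (a.mkQ t')) = ω p z' := by
        rw [← hmkz', hiωa p hpa]
      have e3 : ω p z' = -(ssign K (Bool.xor i k) m * ω z' p) :=
        hω2 (Bool.xor i k) m z' hz' p hpm
      have e4 : ω z' p = -(ssign K i k * ω t' (br x p)) :=
        hconn i k x t' hx ht' z' hmkz' p hpa
      have e5 : ω t' (br x p) = -(ssign K (Bool.xor i m) k * ω (br x p) t') :=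
        hω2 (Bool.xor i m) k (br x p) (hLie.graded i m x hx p hpm) t' ht'
      rw [e0, e1, e2, e3, e4, e5]
      cases i <;> cases m <;> cases k <;>
        simp only [ssign_ff, ssign_ft, ssign_tf, ssign_tt, Bool.xor_false, Bool.xor_true, Bool.false_xor, Bool.true_xor, Bool.not_false, Bool.not_true] <;> ring
    have hmk : a.mkQ t = a.mkQ t0 + a.mkQ t1 := by rw [← map_add, htsum]
    rw [hmk, map_add, map_add, key false t0 ht0, key true t1 ht1]
  have hL9 : ∀ (i m : Bool) (x p : V), x ∈ sub i → p ∈ a → p ∈ sub m →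
      iω (br p x) = (iω p).comp (conn (a.mkQ x)) := by
    intro i m x p hx hpa hpm
    rw [hLie.antisymm i m x hx p hpm, map_neg, map_smul, hL8 i m x p hx hpa hpm]
    cases i <;> cases m <;> simp only [ssign_ff, ssign_ft, ssign_tf, ssign_tt, Bool.xor_false, Bool.xor_true, Bool.false_xor, Bool.true_xor, Bool.not_false, Bool.not_true] <;> module
  -- anti-symmetry of α
  have hα_anti : ∀ i j : Bool, ∀ u ∈ (sub i).map a.mkQ, ∀ v ∈ (sub j).map a.mkQ,
      iω (br (σ v) (σ u)) = -(ssign K i j • iω (br (σ u) (σ v))) := by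
    intro i j u hu v hv
    rw [hLie.antisymm i j (σ u) (hσgr i u hu) (σ v) (hσgr j v hv), map_neg, map_smul]
  have hbrneg2 : ∀ x y : V, br x (-y) = -br x y := by
    intro x y
    calc br x (-y) = br x ((-1 : K) • y) := by rw [neg_one_smul]
      _ = (-1 : K) • br x y := brs2 _ _ _
      _ = -br x y := neg_one_smul _ _
  -- grading of α
  have hα_grade : ∀ i j : Bool, ∀ u ∈ (sub i).map a.mkQ, ∀ v ∈ (sub j).map a.mkQ,
      iω (br (σ u) (σ v)) ∈ dualSub K (V ⧸ a) (fun i => (sub i).map a.mkQ) (Bool.xor i j) := by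
    intro i j u hu v hv
    show iω (br (σ u) (σ v)) ∈
      Submodule.dualAnnihilator ((sub (!(Bool.xor i j))).map a.mkQ)
    refine (Submodule.mem_dualAnnihilator _).mpr ?_
    rintro h ⟨t, ht, rfl⟩
    rw [hiω]
    have hb : br (σ u) (σ v) ∈ sub (Bool.xor i j) :=
      hLie.graded i j _ (hσgr i u hu) _ (hσgr j v hv)
    have hs : σ (a.mkQ t) ∈ sub (!Bool.xor i j) := hσgr _ _ ⟨t, ht, rfl⟩
    cases hij : Bool.xor i j with
    | false =>
      rw [hij] at hb hs
      exact hEven _ _ (Or.inl ⟨hb, by simpa using hs⟩)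
    | true =>
      rw [hij] at hb hs
      exact hEven _ _ (Or.inr ⟨hb, by simpa using hs⟩)
  -- the cyclic identity
  have hα_cyclic : ∀ i j k : Bool, ∀ u ∈ (sub i).map a.mkQ, ∀ v ∈ (sub j).map a.mkQ,
      ∀ w ∈ (sub k).map a.mkQ,
      ssign K i k * iω (br (σ u) (σ v)) w + ssign K k j * iω (br (σ w) (σ u)) v
        + ssign K j i * iω (br (σ v) (σ w)) u = 0 := by
    intro i j k u hu v hv w hw
    have hx := hσgr i u hu
    have hy := hσgr j v hv
    have hz := hσgr k w hw
    have hcl := hω3 i j k (σ u) hx (σ v) hy (σ w) hz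
    have s1 := hω2 (Bool.xor j k) i (br (σ v) (σ w)) (hLie.graded j k _ hy _ hz) (σ u) hx
    have s2 := hω2 (Bool.xor i j) k (br (σ u) (σ v)) (hLie.graded i j _ hx _ hy) (σ w) hz
    have s3 := hω2 (Bool.xor k i) j (br (σ w) (σ u)) (hLie.graded k i _ hz _ hx) (σ v) hy
    rw [s1, s2, s3] at hcl
    rw [hiω, hiω, hiω]
    cases i <;> cases j <;> cases k <;> simp only [ssign_ff, ssign_ft, ssign_tf, ssign_tt, Bool.xor_false, Bool.xor_true, Bool.false_xor, Bool.true_xor, Bool.not_false, Bool.not_true] at hcl ⊢ <;>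
      first
        | linear_combination hcl
        | linear_combination -hcl
  -- the 2-cocycle identity
  have hα_cocycle : ∀ i j k : Bool, ∀ u ∈ (sub i).map a.mkQ, ∀ v ∈ (sub j).map a.mkQ,
      ∀ w ∈ (sub k).map a.mkQ,
      -(ssign K i (Bool.xor j k)) • ((iω (br (σ v) (σ w))).comp (conn u))
        - ssign K i j • (-(ssign K j (Bool.xor i k)) • ((iω (br (σ u) (σ w))).comp (conn v)))
        + (ssign K k i * ssign K k j) •
            (-(ssign K k (Bool.xor i j)) • ((iω (br (σ u) (σ v))).comp (conn w)))
        - iω (br (σ (brH u v)) (σ w)) + ssign K j k • iω (br (σ (brH u w)) (σ v))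
        + iω (br (σ u) (σ (brH v w))) = 0 := by
    intro i j k u hu v hv w hw
    have hx := hσgr i u hu
    have hy := hσgr j v hv
    have hz := hσgr k w hw
    have hjac := hLie.jacobi i j k (σ u) hx (σ v) hy (σ w) hz
    have hjac2 : ssign K i k • iω (br (σ u) (br (σ v) (σ w)))
        + ssign K j i • iω (br (σ v) (br (σ w) (σ u)))
        + ssign K k j • iω (br (σ w) (br (σ u) (σ v))) = 0 := by
      rw [← map_smul, ← map_smul, ← map_smul, ← map_add, ← map_add, hjac, map_zero]
    have hsplit : ∀ (i' j' k' : Bool) (u' v' w' : V ⧸ a),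
        u' ∈ (sub i').map a.mkQ → v' ∈ (sub j').map a.mkQ → w' ∈ (sub k').map a.mkQ →
        iω (br (σ u') (br (σ v') (σ w'))) =
          iω (br (σ u') (σ (brH v' w')))
            - ssign K i' (Bool.xor j' k') • ((iω (br (σ v') (σ w'))).comp (conn u')) := by
      intro i' j' k' u' v' w' hu' hv' hw'
      have hy' := hσgr j' v' hv'
      have hz' := hσgr k' w' hw'
      have hyz : br (σ v') (σ w') ∈ sub (Bool.xor j' k') := hLie.graded j' k' _ hy' _ hz'
      have hmkyz : a.mkQ (br (σ v') (σ w')) = brH v' w' := by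
        rw [← hbrH, hσmk, hσmk]
      have hbm : brH v' w' ∈ (sub (Bool.xor j' k')).map a.mkQ := hLieH.graded j' k' v' hv' w' hw'
      have hDa : br (σ v') (σ w') - σ (brH v' w') ∈ a := by
        apply hmem_a
        rw [map_sub, hmkyz, hσmk, sub_self]
      have hDm : br (σ v') (σ w') - σ (brH v' w') ∈ sub (Bool.xor j' k') :=
        Submodule.sub_mem _ hyz (hσgr _ _ hbm)
      have hbrsplit : br (σ u') (br (σ v') (σ w'))
          = br (σ u') (σ (brH v' w')) + br (σ u') (br (σ v') (σ w') - σ (brH v' w')) := by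
        rw [← bra2]
        congr 1
        abel
      rw [hbrsplit, map_add]
      have h8 := hL8 i' (Bool.xor j' k') (σ u') _ (hσgr i' u' hu') hDa hDm
      rw [hσmk] at h8
      rw [h8]
      have hiD : iω (br (σ v') (σ w') - σ (brH v' w')) = iω (br (σ v') (σ w')) := by
        rw [map_sub, hiωN _ (hσN _), sub_zero]
      rw [hiD]
      module
    rw [hsplit i j k u v w hu hv hw, hsplit j k i v w u hv hw hu,
      hsplit k i j w u v hw hu hv] at hjac2
    have m_uw : brH u w ∈ (sub (Bool.xor i k)).map a.mkQ := hLieH.graded i k u hu w hw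
    have m_uv : brH u v ∈ (sub (Bool.xor i j)).map a.mkQ := hLieH.graded i j u hu v hv
    have hsm2 : ∀ (u' h' : V ⧸ a) (c : K),
        iω (br (σ u') (σ (c • h'))) = c • iω (br (σ u') (σ h')) := by
      intro u' h' c
      rw [map_smul, brs2, map_smul]
    have hneg2 : ∀ u' h' : V ⧸ a, iω (br (σ u') (σ (-h'))) = -iω (br (σ u') (σ h')) := by
      intro u' h'
      rw [map_neg, hbrneg2, map_neg]
    rw [hLieH.antisymm i k u hu w hw] at hjac2
    rw [hneg2, hsm2] at hjac2
    rw [hα_anti (Bool.xor i k) j (brH u w) m_uw v hv] at hjac2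
    rw [hα_anti (Bool.xor i j) k (brH u v) m_uv w hw] at hjac2
    rw [hα_anti i k u hu w hw] at hjac2
    rw [LinearMap.neg_comp, LinearMap.smul_comp] at hjac2
    cases i <;> cases j <;> cases k <;> simp only [ssign_ff, ssign_ft, ssign_tf, ssign_tt, Bool.xor_false, Bool.xor_true, Bool.false_xor, Bool.true_xor, Bool.not_false, Bool.not_true] at hjac2 ⊢ <;>
      first
        | linear_combination (norm := module) hjac2
        | linear_combination (norm := module) -hjac2
        | linear_combination (norm := module) (-1 : K) • hjac2
        | linear_combination (norm := module) (1 : K) • hjac2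
  -- α is bilinear
  have hα_bilin : IsBilinMap K (V ⧸ a) (Module.Dual K (V ⧸ a))
      (fun u v => iω (br (σ u) (σ v))) := by
    refine ⟨?_, ?_, ?_, ?_⟩
    · intro x y z
      show iω (br (σ (x + y)) (σ z)) = _
      rw [map_add, bra1, map_add]
    · intro c x y
      show iω (br (σ (c • x)) (σ y)) = _
      rw [map_smul, brs1, map_smul]
    · intro x y z
      show iω (br (σ x) (σ (y + z))) = _
      rw [map_add, bra2, map_add]
    · intro c x y
      show iω (br (σ x) (σ (c • y))) = _
      rw [map_smul, brs2, map_smul]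
  -- brG is bilinear
  have hbrG_bilin : IsBilinMap K ((V ⧸ a) × Module.Dual K (V ⧸ a))
      ((V ⧸ a) × Module.Dual K (V ⧸ a))
      (fun X Y => Φl (br (Ψ X) (Ψ Y))) := by
    refine ⟨?_, ?_, ?_, ?_⟩
    · intro x y z
      show Φl (br (Ψ (x + y)) (Ψ z)) = _
      rw [hΨadd, bra1, map_add]
    · intro c x y
      show Φl (br (Ψ (c • x)) (Ψ y)) = _
      rw [hΨsmul, brs1, map_smul]
    · intro x y z
      show Φl (br (Ψ x) (Ψ (y + z))) = _
      rw [hΨadd, bra2, map_add]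
    · intro c x y
      show Φl (br (Ψ x) (Ψ (c • y))) = _
      rw [hΨsmul, brs2, map_smul]
  -- ωG is bilinear
  have hωG_bilin : IsBilinMap K ((V ⧸ a) × Module.Dual K (V ⧸ a)) K
      (fun X Y => ω (Ψ X) (Ψ Y)) := by
    refine ⟨?_, ?_, ?_, ?_⟩
    · intro x y z
      show ω (Ψ (x + y)) (Ψ z) = _
      rw [hΨadd, ωa1]
    · intro c x y
      show ω (Ψ (c • x)) (Ψ y) = _
      rw [hΨsmul, ωs1]
    · intro x y z
      show ω (Ψ x) (Ψ (y + z)) = _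
      rw [hΨadd, ωa2]
    · intro c x y
      show ω (Ψ x) (Ψ (c • y)) = _
      rw [hΨsmul, ωs2]
  -- item 7
  have h7 : ∀ u v : V ⧸ a,
      Φl (br (Ψ (u, (0 : Module.Dual K (V ⧸ a))))
        (Ψ (v, (0 : Module.Dual K (V ⧸ a)))))
        = (brH u v, iω (br (σ u) (σ v))) := by
    intro u v
    rw [hsymmN, hsymmN, hΦl]
    have h1 : a.mkQ (br (σ u) (σ v)) = brH u v := by rw [← hbrH, hσmk, hσmk]
    rw [h1]
  -- item 8
  have h8 : ∀ i j : Bool, ∀ u ∈ (sub i).map a.mkQ,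
      ∀ ξ ∈ dualSub K (V ⧸ a) (fun i => (sub i).map a.mkQ) j,
      Φl (br (Ψ (u, (0 : Module.Dual K (V ⧸ a)))) (Ψ ((0 : V ⧸ a), ξ)))
        = ((0 : V ⧸ a), -(ssign K i j) • (ξ.comp (conn u))) := by
    intro i j u hu ξ hξ
    obtain ⟨hpa, hpξ⟩ := hsymmA ξ
    have hpj : Ψ ((0 : V ⧸ a), ξ) ∈ sub j := hτhom j ξ hξ _ hpa hpξ
    rw [hsymmN, hΦl]
    have h1 : a.mkQ (br (σ u) (Ψ ((0 : V ⧸ a), ξ))) = 0 :=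
      hmkQa _ (haIdeal _ _ hpa).1
    have h2 := hL8 i j (σ u) _ (hσgr i u hu) hpa hpj
    rw [hσmk, hpξ] at h2
    rw [h1, h2]
  -- item 9
  have h9 : ∀ i j : Bool, ∀ u ∈ (sub i).map a.mkQ,
      ∀ ξ ∈ dualSub K (V ⧸ a) (fun i => (sub i).map a.mkQ) j,
      Φl (br (Ψ ((0 : V ⧸ a), ξ)) (Ψ (u, (0 : Module.Dual K (V ⧸ a)))))
        = ((0 : V ⧸ a), ξ.comp (conn u)) := by
    intro i j u hu ξ hξ
    obtain ⟨hpa, hpξ⟩ := hsymmA ξ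
    have hpj : Ψ ((0 : V ⧸ a), ξ) ∈ sub j := hτhom j ξ hξ _ hpa hpξ
    rw [hsymmN, hΦl]
    have h1 : a.mkQ (br (Ψ ((0 : V ⧸ a), ξ)) (σ u)) = 0 :=
      hmkQa _ (haIdeal _ _ hpa).2
    have h2 := hL9 i j (σ u) _ (hσgr i u hu) hpa hpj
    rw [hσmk, hpξ] at h2
    rw [h1, h2]
  -- item 10
  have h10 : ∀ ξ ζ : Module.Dual K (V ⧸ a),
      Φl (br (Ψ ((0 : V ⧸ a), ξ)) (Ψ ((0 : V ⧸ a), ζ))) = 0 := by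
    intro ξ ζ
    rw [habr _ (hsymmA ξ).1 _ (hsymmA ζ).1, map_zero]
  -- item 12
  have h12 : ∀ i i' j j' : Bool, ∀ u ∈ (sub i).map a.mkQ,
      ∀ ξ ∈ dualSub K (V ⧸ a) (fun i => (sub i).map a.mkQ) i',
      ∀ v ∈ (sub j).map a.mkQ,
      ∀ ζ ∈ dualSub K (V ⧸ a) (fun i => (sub i).map a.mkQ) j',
      ω (Ψ (u, ξ)) (Ψ (v, ζ)) = ξ v - ssign K j' i * ζ u := by
    intro i i' j j' u hu ξ hξ v hv ζ hζ
    have hsplitu : Ψ (u, ξ) = σ u + Ψ ((0 : V ⧸ a), ξ) := by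
      rw [← hsymmN u, ← hΨadd]
      congr 1
      rw [Prod.mk_add_mk, add_zero, zero_add]
    have hsplitv : Ψ (v, ζ) = σ v + Ψ ((0 : V ⧸ a), ζ) := by
      rw [← hsymmN v, ← hΨadd]
      congr 1
      rw [Prod.mk_add_mk, add_zero, zero_add]
    obtain ⟨hpa, hpξ⟩ := hsymmA ξ
    obtain ⟨hqa, hqζ⟩ := hsymmA ζ
    have hqj' : Ψ ((0 : V ⧸ a), ζ) ∈ sub j' := hτhom j' ζ hζ _ hqa hqζ
    rw [hsplitu, hsplitv, ωa1, ωa2, ωa2]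
    have t1 : ω (σ u) (σ v) = 0 := (hNLag _).mp (hσN u) _ (hσN v)
    have t2 : ω (Ψ ((0 : V ⧸ a), ξ)) (Ψ ((0 : V ⧸ a), ζ)) = 0 :=
      (haLag _).mp hpa _ hqa
    have t3 : ω (Ψ ((0 : V ⧸ a), ξ)) (σ v) = ξ v := by
      rw [← hiω, hpξ]
    have t4 : ω (Ψ ((0 : V ⧸ a), ζ)) (σ u) = ζ u := by
      rw [← hiω, hqζ]
    have t5 := hω2 i j' (σ u) (hσgr i u hu) _ hqj'
    rw [t4] at t5
    rw [t1, t2, t3]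
    cases i <;> cases j' <;> simp only [ssign_ff, ssign_ft, ssign_tf, ssign_tt, Bool.xor_false, Bool.xor_true, Bool.false_xor, Bool.true_xor, Bool.not_false, Bool.not_true] at t5 ⊢ <;>
      first
        | linear_combination t5
        | linear_combination -t5
  -- item 16
  have h16 : ∀ x ∈ N, Φl x = (a.mkQ x, (0 : Module.Dual K (V ⧸ a))) := by
    intro x hx
    rw [hΦl, hiωN x hx]
  -- item 17
  have h17 : ∀ p ∈ a, (Φl p).1 = 0 ∧ ∀ u : V, (Φl p).2 (a.mkQ u) = ω p u := by
    intro p hp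
    have h := hΦl p
    exact ⟨by rw [h]; exact hmkQa p hp, fun u => by rw [h]; exact hiωa p hp u⟩
  -- item 18
  have h18 : ∀ x y : V, Φl (br x y) = Φl (br (Ψ (Φl x)) (Ψ (Φl y))) := by
    intro x y
    rw [hΨ1, hΨ1]
  -- item 19
  have h19 : ∀ x y : V, ω (Ψ (Φl x)) (Ψ (Φl y)) = ω x y := by
    intro x y
    rw [hΨ1, hΨ1]
  exact ⟨fun u v => iω (br (σ u) (σ v)),
    fun X Y => Φl (br (Ψ X) (Ψ Y)),
    fun X Y => ω (Ψ X) (Ψ Y),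
    fun x => Φl x,
    hα_bilin, hα_grade, hα_anti, hα_cocycle, hα_cyclic,
    hbrG_bilin, h7, h8, h9, h10, hωG_bilin, h12,
    fun x y => map_add Φl x y, fun c x => map_smul Φl c x,
    ⟨hΦinj, hΦsurj⟩, h16, h17, h18, h19⟩
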